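/- arXiv:1807.05822 — 4 statements merged into one kernel-verified Lean document; each statement's English description precedes it below -/
import Mathlib

section
/- Let J be a finite partially ordered set in which any two elements with a common upper bound have a least upper bound, and let f : J → ℂ. Define a new function f̂ on J by f̂(p) = f(p) + ∑_{∅≠K⊆{q∈J : q>p}} (−1)^{|K|}·t_K, where t_K = f(q_K) if the subset K has a least upper bound q_K in J and t_K = 0 otherwise. Then for every p ∈ J one has f(p) = ∑_{q∈J, q≥p} f̂(q). -/
open Classical in
/-- `t_K = f(q_K)` if the finite set `K` has a least upper bound `q_K`, and `0` otherwise. -/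
noncomputable def tK {J : Type*} [PartialOrder J] (f : J → ℂ) (K : Finset J) : ℂ :=
  if h : ∃ u : J, IsLUB (K : Set J) u then f h.choose else 0

open Classical in
/-- `f̂(p) = f(p) + ∑_{∅ ≠ K ⊆ {q : q > p}} (−1)^{|K|} t_K`. -/
noncomputable def fhat {J : Type*} [Fintype J] [PartialOrder J] (f : J → ℂ) (p : J) : ℂ :=
  f p + ∑ K ∈ (Finset.univ.filter (fun q : J => p < q)).powerset.erase ∅,
    (-1 : ℂ) ^ K.card * tK f K

open Finset

section Aux

variable {J : Type*} [Fintype J] [PartialOrder J]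

open Classical in
noncomputable def Acoef (m : J) (u : J) : ℂ :=
  ∑ K ∈ (Finset.univ.filter (fun q : J => m < q)).powerset.erase ∅,
    if IsLUB (K : Set J) u then (-1 : ℂ) ^ K.card else 0

lemma exists_isLUB_of_ub
    (hql : ∀ p q : J, (∃ u : J, p ≤ u ∧ q ≤ u) → ∃ u : J, IsLUB {p, q} u)
    (K : Finset J) (hne : K.Nonempty) :
    ∀ u : J, (∀ x ∈ K, x ≤ u) → ∃ v, IsLUB (K : Set J) v ∧ v ≤ u := by
  induction hne using Finset.Nonempty.cons_induction with
  | singleton a =>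
    intro u hu
    exact ⟨a, by simpa using isLUB_singleton, hu a (by simp)⟩
  | cons a s ha hs ih =>
    intro u hu
    obtain ⟨v, hv, hvu⟩ := ih u (fun x hx => hu x (by simp [hx]))
    have hau : a ≤ u := hu a (by simp)
    obtain ⟨w, hw⟩ := hql a v ⟨u, hau, hvu⟩
    have hU : upperBounds (insert a (↑s : Set J)) = upperBounds ({a, v} : Set J) := by
      rw [upperBounds_insert, upperBounds_insert, upperBounds_singleton, hv.upperBounds_eq]
    have hlub : IsLUB (↑(Finset.cons a s ha) : Set J) w := by
      rw [Finset.coe_cons, IsLUB, hU]; exact hw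
    have huub : u ∈ upperBounds ({a, v} : Set J) := by
      intro x hx
      rcases hx with rfl | hx
      · exact hau
      · simp only [Set.mem_singleton_iff] at hx; subst hx; exact hvu
    exact ⟨w, hlub, hw.2 huub⟩

lemma Acoef_eq_zero {m v : J} (h : ¬ m < v) : Acoef m v = 0 := by
  classical
  refine Finset.sum_eq_zero fun K hK => ?_
  rw [Finset.mem_erase, Finset.mem_powerset] at hK
  rw [if_neg]
  intro hlub
  obtain ⟨x, hx⟩ := Finset.nonempty_iff_ne_empty.2 hK.1
  have hx' : m < x := by
    have := hK.2 hx; simpa using this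
  exact h (lt_of_lt_of_le hx' (hlub.1 (by exact_mod_cast hx)))

end Aux

section Mat

variable {J : Type*} [Fintype J] [PartialOrder J]

open Classical in
noncomputable def Dmat (J : Type*) [Fintype J] [PartialOrder J] : Matrix J J ℂ :=
  fun m v => if m = v then 1 else Acoef m v

open Classical in
noncomputable def Zmat (J : Type*) [Fintype J] [PartialOrder J] : Matrix J J ℂ :=
  fun m v => if m ≤ v then 1 else 0

open Classical in
lemma Finset.sum_ite_subset_card {m u : J} (hmu : m ≤ u) :
    (∑ K ∈ (Finset.univ.filter (fun q : J => m < q)).powerset.erase ∅,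
      if K ⊆ Finset.univ.filter (fun v : J => m < v ∧ v ≤ u) then (-1 : ℂ) ^ K.card else 0)
    = if m = u then 0 else -1 := by
  classical
  rw [← Finset.sum_filter]
  have hset : ((Finset.univ.filter (fun q : J => m < q)).powerset.erase ∅).filter
      (fun K => K ⊆ Finset.univ.filter (fun v : J => m < v ∧ v ≤ u))
      = (Finset.univ.filter (fun v : J => m < v ∧ v ≤ u)).powerset.erase ∅ := by
    ext K
    simp only [Finset.mem_filter, Finset.mem_erase, Finset.mem_powerset]
    constructor
    · rintro ⟨⟨h1, _⟩, h3⟩; exact ⟨h1, h3⟩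
    · rintro ⟨h1, h2⟩
      refine ⟨⟨h1, fun x hx => ?_⟩, h2⟩
      have := h2 hx
      simp only [Finset.mem_filter, Finset.mem_univ, true_and] at this ⊢
      exact this.1
  rw [hset]
  have hpow : (∑ K ∈ (Finset.univ.filter (fun v : J => m < v ∧ v ≤ u)).powerset, (-1 : ℂ) ^ K.card)
      = if (Finset.univ.filter (fun v : J => m < v ∧ v ≤ u)) = ∅ then 1 else 0 := by
    have := Finset.sum_powerset_neg_one_pow_card
      (x := Finset.univ.filter (fun v : J => m < v ∧ v ≤ u))
    have h2 : ((∑ K ∈ (Finset.univ.filter (fun v : J => m < v ∧ v ≤ u)).powerset,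
        (-1 : ℤ) ^ K.card : ℤ) : ℂ)
        = ∑ K ∈ (Finset.univ.filter (fun v : J => m < v ∧ v ≤ u)).powerset, (-1 : ℂ) ^ K.card := by
      push_cast
      rfl
    rw [← h2, this]
    split <;> simp
  have hemp : (∅ : Finset J) ∈ (Finset.univ.filter (fun v : J => m < v ∧ v ≤ u)).powerset := by
    simp
  have := Finset.sum_erase_add ((Finset.univ.filter (fun v : J => m < v ∧ v ≤ u)).powerset)
    (fun K => (-1 : ℂ) ^ K.card) hemp
  rw [hpow] at this
  simp only [Finset.card_empty, pow_zero] at this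
  by_cases hmu' : m = u
  · have hE : (Finset.univ.filter (fun v : J => m < v ∧ v ≤ u)) = ∅ := by
      subst hmu'
      ext v; simp only [Finset.mem_filter, Finset.mem_univ, true_and, Finset.notMem_empty,
        iff_false, not_and]
      intro h1 h2; exact absurd (le_antisymm h2 h1.le) (ne_of_gt h1)
    rw [if_pos hmu']
    rw [if_pos hE] at this
    linear_combination this - 1
  · have hE : (Finset.univ.filter (fun v : J => m < v ∧ v ≤ u)) ≠ ∅ := by
      intro h
      have hmem : u ∈ (Finset.univ.filter (fun v : J => m < v ∧ v ≤ u)) := by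
        simp [lt_of_le_of_ne hmu hmu']
      rw [h] at hmem
      exact absurd hmem (Finset.notMem_empty u)
    rw [if_neg hmu']
    rw [if_neg hE] at this
    linear_combination this

open Classical in
lemma DZ_eq_one
    (hql : ∀ p q : J, (∃ u : J, p ≤ u ∧ q ≤ u) → ∃ u : J, IsLUB {p, q} u) :
    Dmat J * Zmat J = 1 := by
  classical
  ext m u
  rw [Matrix.mul_apply, Matrix.one_apply]
  simp only [Zmat, mul_ite, mul_one, mul_zero]
  rw [← Finset.sum_filter]
  by_cases hmu : m ≤ u
  · have hm : m ∈ Finset.univ.filter (fun v : J => v ≤ u) := by simp [hmu]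
    rw [← Finset.sum_erase_add _ _ hm]
    have hdm : Dmat J m m = 1 := by simp [Dmat]
    rw [hdm]
    have hcongr : ∑ v ∈ (Finset.univ.filter (fun v : J => v ≤ u)).erase m, Dmat J m v
        = ∑ v ∈ (Finset.univ.filter (fun v : J => v ≤ u)).erase m, Acoef m v := by
      refine Finset.sum_congr rfl fun v hv => ?_
      simp only [Finset.mem_erase] at hv
      simp [Dmat, Ne.symm hv.1]
    have herase : ∑ v ∈ (Finset.univ.filter (fun v : J => v ≤ u)).erase m, Acoef m v
        = ∑ v ∈ Finset.univ.filter (fun v : J => m < v ∧ v ≤ u), Acoef m v := by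
      refine (Finset.sum_subset ?_ ?_).symm
      · intro v hv
        simp only [Finset.mem_filter, Finset.mem_univ, true_and] at hv
        simp only [Finset.mem_erase, Finset.mem_filter, Finset.mem_univ, true_and]
        exact ⟨ne_of_gt hv.1, hv.2⟩
      · intro v hv hv'
        simp only [Finset.mem_erase, Finset.mem_filter, Finset.mem_univ, true_and] at hv
        simp only [Finset.mem_filter, Finset.mem_univ, true_and, not_and] at hv'
        have : ¬ m < v := fun h => hv' h hv.2
        exact Acoef_eq_zero this
    rw [hcongr, herase]
    -- now compute the Ioc-sum
    have key : ∑ v ∈ Finset.univ.filter (fun v : J => m < v ∧ v ≤ u), Acoef m v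
        = (if m = u then 0 else -1) := by
      unfold Acoef
      rw [Finset.sum_comm]
      have hterm : ∀ K ∈ (Finset.univ.filter (fun q : J => m < q)).powerset.erase ∅,
          (∑ v ∈ Finset.univ.filter (fun v : J => m < v ∧ v ≤ u),
            if IsLUB (K : Set J) v then (-1 : ℂ) ^ K.card else 0)
          = if K ⊆ Finset.univ.filter (fun v : J => m < v ∧ v ≤ u) then (-1 : ℂ) ^ K.card else 0 := by
        intro K hK
        rw [Finset.mem_erase, Finset.mem_powerset] at hK
        have hKne : K.Nonempty := Finset.nonempty_iff_ne_empty.2 hK.1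
        have hKgt : ∀ x ∈ K, m < x := fun x hx => by
          have := hK.2 hx; simpa using this
        by_cases hsub : ∀ x ∈ K, x ≤ u
        · obtain ⟨v0, hv0, hv0u⟩ := exists_isLUB_of_ub hql K hKne u hsub
          have hv0m : m < v0 := lt_of_lt_of_le (hKgt _ hKne.choose_spec)
            (hv0.1 (by exact_mod_cast hKne.choose_spec))
          have hsub' : K ⊆ Finset.univ.filter (fun v : J => m < v ∧ v ≤ u) := by
            intro x hx
            simp only [Finset.mem_filter, Finset.mem_univ, true_and]
            exact ⟨hKgt x hx, hsub x hx⟩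
          rw [if_pos hsub']
          rw [Finset.sum_eq_single v0]
          · rw [if_pos hv0]
          · intro b hb hbne
            rw [if_neg]
            intro hlub
            exact hbne (hlub.unique hv0)
          · intro hv0mem
            exact absurd (by simp [hv0m, hv0u]) hv0mem
        · push_neg at hsub
          obtain ⟨x, hxK, hxu⟩ := hsub
          rw [if_neg fun h => hxu (Finset.mem_filter.mp (h hxK)).2.2]
          refine Finset.sum_eq_zero fun v hv => ?_
          simp only [Finset.mem_filter, Finset.mem_univ, true_and] at hv
          rw [if_neg]
          intro hlub
          exact hxu (le_trans (hlub.1 (by exact_mod_cast hxK)) hv.2)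
      rw [Finset.sum_congr rfl hterm, Finset.sum_ite_subset_card hmu]
    rw [key]
    by_cases h : m = u <;> simp [h]
  · rw [if_neg (fun h => hmu (le_of_eq h))]
    refine Finset.sum_eq_zero fun v hv => ?_
    simp only [Finset.mem_filter, Finset.mem_univ, true_and] at hv
    have h1 : m ≠ v := fun h => hmu (h ▸ hv)
    have h2 : ¬ m < v := fun h => hmu (le_trans h.le hv)
    simp [Dmat, h1, Acoef_eq_zero h2]

end Mat

section Main

variable {J : Type*} [Fintype J] [PartialOrder J]

open Classical in
lemma sum_Acoef
    (hql : ∀ p q : J, (∃ u : J, p ≤ u ∧ q ≤ u) → ∃ u : J, IsLUB {p, q} u)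
    (p u : J) :
    ∑ m ∈ Finset.univ.filter (fun m : J => p ≤ m), Acoef m u
      = (if p = u then 1 else 0) - (if p ≤ u then 1 else 0) := by
  classical
  have hZD : Zmat J * Dmat J = 1 := mul_eq_one_comm.mp (DZ_eq_one hql)
  have h1 : (Zmat J * Dmat J) p u = (if p = u then (1:ℂ) else 0) := by
    rw [hZD, Matrix.one_apply]
  rw [Matrix.mul_apply] at h1
  simp only [Zmat, ite_mul, one_mul, zero_mul] at h1
  rw [← Finset.sum_filter] at h1
  have hsplit : ∑ m ∈ Finset.univ.filter (fun m : J => p ≤ m), Dmat J m u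
      = (∑ m ∈ Finset.univ.filter (fun m : J => p ≤ m), Acoef m u)
        + (if p ≤ u then 1 else 0) := by
    have hterm : ∀ m ∈ Finset.univ.filter (fun m : J => p ≤ m),
        Dmat J m u = Acoef m u + (if m = u then 1 else 0) := by
      intro m _
      by_cases h : m = u
      · subst h
        simp [Dmat, Acoef_eq_zero (lt_irrefl m)]
      · simp [Dmat, h]
    rw [Finset.sum_congr rfl hterm, Finset.sum_add_distrib]
    congr 1
    rw [Finset.sum_ite_eq' (Finset.univ.filter (fun m : J => p ≤ m)) u (fun _ => (1:ℂ))]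
    simp
  rw [hsplit] at h1
  linear_combination h1

open Classical in
lemma tK_eq_sum {J : Type*} [Fintype J] [PartialOrder J] (f : J → ℂ) (K : Finset J) :
    tK f K = ∑ u : J, if IsLUB (K : Set J) u then f u else 0 := by
  classical
  unfold tK
  by_cases h : ∃ u : J, IsLUB (K : Set J) u
  · rw [dif_pos h]
    rw [Finset.sum_eq_single h.choose]
    · rw [if_pos h.choose_spec]
    · intro b _ hb
      rw [if_neg]
      intro hlub
      exact hb (hlub.unique h.choose_spec)
    · intro hmem
      exact absurd (Finset.mem_univ _) hmem
  · rw [dif_neg h]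
    refine (Finset.sum_eq_zero fun u _ => ?_).symm
    rw [if_neg fun hu => h ⟨u, hu⟩]

open Classical in
theorem stmt10_aux {J : Type*} [Fintype J] [PartialOrder J]
    (hql : ∀ p q : J, (∃ u : J, p ≤ u ∧ q ≤ u) → ∃ u : J, IsLUB {p, q} u)
    (f : J → ℂ) (p : J) :
    f p = ∑ q ∈ Finset.univ.filter (fun q : J => p ≤ q), fhat f q := by
  classical
  have hfhat : ∀ q : J, fhat f q = f q + ∑ u : J, Acoef q u * f u := by
    intro q
    unfold fhat Acoef
    congr 1
    have : ∀ K ∈ (Finset.univ.filter (fun r : J => q < r)).powerset.erase ∅,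
        (-1 : ℂ) ^ K.card * tK f K
          = ∑ u : J, (if IsLUB (K : Set J) u then (-1 : ℂ) ^ K.card else 0) * f u := by
      intro K _
      rw [tK_eq_sum, Finset.mul_sum]
      refine Finset.sum_congr rfl fun u _ => ?_
      by_cases h : IsLUB (K : Set J) u <;> simp [h]
    rw [Finset.sum_congr rfl this, Finset.sum_comm]
    refine Finset.sum_congr rfl fun u _ => ?_
    rw [Finset.sum_mul]
  symm
  calc ∑ q ∈ Finset.univ.filter (fun q : J => p ≤ q), fhat f q
      = (∑ q ∈ Finset.univ.filter (fun q : J => p ≤ q), f q)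
        + ∑ u : J, (∑ q ∈ Finset.univ.filter (fun q : J => p ≤ q), Acoef q u) * f u := by
        simp only [hfhat, Finset.sum_add_distrib]
        congr 1
        rw [Finset.sum_comm]
        refine Finset.sum_congr rfl fun u _ => ?_
        rw [Finset.sum_mul]
    _ = (∑ q ∈ Finset.univ.filter (fun q : J => p ≤ q), f q)
        + ∑ u : J, ((if p = u then 1 else 0) - (if p ≤ u then 1 else 0)) * f u := by
        congr 1
        refine Finset.sum_congr rfl fun u _ => ?_
        rw [sum_Acoef hql]
    _ = f p := by
        simp only [sub_mul, ite_mul, one_mul, zero_mul, Finset.sum_sub_distrib]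
        rw [Finset.sum_ite_eq Finset.univ p f, ← Finset.sum_filter]
        simp

end Main

open Classical in
/-- In a finite quasi-lattice `J` (any two elements with a common upper bound have a least
upper bound), for every `f : J → ℂ` and every `p ∈ J` one has
`f(p) = ∑_{q ≥ p} f̂(q)`. -/
theorem stmt10 {J : Type*} [Fintype J] [PartialOrder J]
    (hql : ∀ p q : J, (∃ u : J, p ≤ u ∧ q ≤ u) → ∃ u : J, IsLUB {p, q} u)
    (f : J → ℂ) (p : J) :
    f p = ∑ q ∈ Finset.univ.filter (fun q : J => p ≤ q), fhat f q := by
  exact stmt10_aux hql f p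
end

section
/- Let F be a (not necessarily unital) C*-algebra, I a quasi-lattice, and (B_q)_{q∈I} a family of closed *-subalgebras of F such that B_q·B_r ⊆ B_{q∨r} whenever q,r ∈ I have a common upper bound, and B_q·B_r = {0} otherwise. Let 𝔅 denote the linear span of ⋃_{q∈I} B_q. Fix p ∈ I and let ψ : 𝔅 → ℂ be a linear functional such that ψ vanishes on B_q for every q ∈ I with q ≰ p, and such that ψ(x*x) ≥ 0 for every x in the linear span of ⋃_{q≤p} B_q. Then ψ(x*x) ≥ 0 for every x ∈ 𝔅. -/
open scoped ComplexOrder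

/-- Let `F` be a (not necessarily unital) C*-algebra, `I` a quasi-lattice, and `(B q)_{q ∈ I}`
closed *-subalgebras of `F` with `B_q · B_r ⊆ B_{q ∨ r}` when `q, r` have a common upper
bound and `B_q · B_r = {0}` otherwise.  Let `𝔅` be the linear span of `⋃_q B_q`.  If a
linear functional `ψ` vanishes on `B_q` for every `q ≰ p` and satisfies `ψ(x* x) ≥ 0` for
every `x` in the linear span of `⋃_{q ≤ p} B_q`, then `ψ(x* x) ≥ 0` for every `x ∈ 𝔅`. -/
theorem stmt12 {F : Type*} [NonUnitalCStarAlgebra F] {I : Type*} [PartialOrder I]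
    (hql : ∀ q r : I, (∃ u : I, q ≤ u ∧ r ≤ u) → ∃ u : I, IsLUB {q, r} u)
    (B : I → NonUnitalStarSubalgebra ℂ F)
    (hclosed : ∀ q, IsClosed (B q : Set F))
    (hmul : ∀ q r u : I, IsLUB {q, r} u → ∀ x ∈ B q, ∀ y ∈ B r, x * y ∈ B u)
    (hmul0 : ∀ q r : I, ¬ (∃ u : I, q ≤ u ∧ r ≤ u) →
      ∀ x ∈ B q, ∀ y ∈ B r, x * y = 0)
    (p : I) (ψ : F →ₗ[ℂ] ℂ)
    (hvanish : ∀ q : I, ¬ q ≤ p → ∀ x ∈ B q, ψ x = 0)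
    (hpos : ∀ x ∈ Submodule.span ℂ (⋃ q ∈ {q : I | q ≤ p}, (B q : Set F)),
      0 ≤ ψ (star x * x)) :
    ∀ x ∈ Submodule.span ℂ (⋃ q : I, (B q : Set F)), 0 ≤ ψ (star x * x) := by
  classical
  set M := Submodule.span ℂ (⋃ q ∈ {q : I | q ≤ p}, (B q : Set F)) with hM
  set N := Submodule.span ℂ (⋃ q ∈ {q : I | ¬ q ≤ p}, (B q : Set F)) with hN
  set A := Submodule.span ℂ (⋃ q : I, (B q : Set F)) with hA
  -- key pointwise facts
  have key : ∀ q r : I, ¬ r ≤ p → ∀ a ∈ B q, ∀ b ∈ B r, ψ (a * b) = 0 := by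
    intro q r hr a ha b hb
    by_cases hub : ∃ u : I, q ≤ u ∧ r ≤ u
    · obtain ⟨u, hu⟩ := hql q r hub
      have hru : r ≤ u := hu.1 (by simp)
      exact hvanish u (fun h => hr (hru.trans h)) _ (hmul q r u hu a ha b hb)
    · rw [hmul0 q r hub a ha b hb, map_zero]
  have key' : ∀ q r : I, ¬ r ≤ p → ∀ a ∈ B q, ∀ b ∈ B r, ψ (b * a) = 0 := by
    intro q r hr a ha b hb
    by_cases hub : ∃ u : I, r ≤ u ∧ q ≤ u
    · obtain ⟨u, hu⟩ := hql r q hub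
      have hru : r ≤ u := hu.1 (by simp)
      exact hvanish u (fun h => hr (hru.trans h)) _ (hmul r q u hu b hb a ha)
    · rw [hmul0 r q hub b hb a ha, map_zero]
  -- ψ (a * b) = 0 for a ∈ A, b ∈ N
  have hAN : ∀ b ∈ N, ∀ a ∈ A, ψ (a * b) = 0 := by
    intro b hb
    induction hb using Submodule.span_induction with
    | mem x hx =>
      obtain ⟨r, hr, hxr⟩ : ∃ r, ¬ r ≤ p ∧ x ∈ B r := by simpa using hx
      intro a ha
      induction ha using Submodule.span_induction with
      | mem y hy =>
        obtain ⟨q, hq⟩ : ∃ q, y ∈ B q := by simpa using hy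
        exact key q r hr y hq x hxr
      | zero => simp
      | add y z _ _ hy hz => rw [add_mul, map_add, hy, hz, add_zero]
      | smul c y _ hy => rw [smul_mul_assoc, map_smul, hy, smul_zero]
    | zero => intro a ha; simp
    | add x y _ _ hx hy =>
      intro a ha
      rw [mul_add, map_add, hx a ha, hy a ha, add_zero]
    | smul c x _ hx =>
      intro a ha
      rw [mul_smul_comm, map_smul, hx a ha, smul_zero]
  -- ψ (b * a) = 0 for a ∈ A, b ∈ N
  have hNA : ∀ b ∈ N, ∀ a ∈ A, ψ (b * a) = 0 := by
    intro b hb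
    induction hb using Submodule.span_induction with
    | mem x hx =>
      obtain ⟨r, hr, hxr⟩ : ∃ r, ¬ r ≤ p ∧ x ∈ B r := by simpa using hx
      intro a ha
      induction ha using Submodule.span_induction with
      | mem y hy =>
        obtain ⟨q, hq⟩ : ∃ q, y ∈ B q := by simpa using hy
        exact key' q r hr y hq x hxr
      | zero => simp
      | add y z _ _ hy hz => rw [mul_add, map_add, hy, hz, add_zero]
      | smul c y _ hy => rw [mul_smul_comm, map_smul, hy, smul_zero]
    | zero => intro a ha; simp
    | add x y _ _ hx hy =>
      intro a ha
      rw [add_mul, map_add, hx a ha, hy a ha, add_zero]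
    | smul c x _ hx =>
      intro a ha
      rw [smul_mul_assoc, map_smul, hx a ha, smul_zero]
  -- star-closure of N
  have hNstar : ∀ z ∈ N, star z ∈ N := by
    intro z hz
    induction hz using Submodule.span_induction with
    | mem x hx =>
      obtain ⟨r, hr, hxr⟩ : ∃ r, ¬ r ≤ p ∧ x ∈ B r := by simpa using hx
      refine Submodule.subset_span ?_
      simp only [Set.mem_iUnion]
      exact ⟨r, hr, star_mem hxr⟩
    | zero => simp
    | add x y _ _ hx hy => rw [star_add]; exact N.add_mem hx hy
    | smul c x _ hx => rw [star_smul]; exact N.smul_mem _ hx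
  -- star-closure of M
  have hMstar : ∀ z ∈ M, star z ∈ M := by
    intro z hz
    induction hz using Submodule.span_induction with
    | mem x hx =>
      obtain ⟨r, hr, hxr⟩ : ∃ r, r ≤ p ∧ x ∈ B r := by simpa using hx
      refine Submodule.subset_span ?_
      simp only [Set.mem_iUnion]
      exact ⟨r, hr, star_mem hxr⟩
    | zero => simp
    | add x y _ _ hx hy => rw [star_add]; exact M.add_mem hx hy
    | smul c x _ hx => rw [star_smul]; exact M.smul_mem _ hx
  -- M, N ≤ A
  have hMA : M ≤ A := Submodule.span_mono (by
    intro x hx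
    obtain ⟨r, _, hxr⟩ : ∃ r, r ≤ p ∧ x ∈ B r := by simpa using hx
    exact Set.mem_iUnion.mpr ⟨r, hxr⟩)
  have hNAle : N ≤ A := Submodule.span_mono (by
    intro x hx
    obtain ⟨r, _, hxr⟩ : ∃ r, ¬ r ≤ p ∧ x ∈ B r := by simpa using hx
    exact Set.mem_iUnion.mpr ⟨r, hxr⟩)
  -- decomposition A ≤ M ⊔ N
  have hsub : A ≤ M ⊔ N := by
    rw [hA]
    refine Submodule.span_le.mpr ?_
    intro x hx
    obtain ⟨r, hxr⟩ : ∃ r, x ∈ B r := by simpa using hx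
    by_cases hr : r ≤ p
    · refine Submodule.mem_sup_left (Submodule.subset_span ?_)
      simp only [Set.mem_iUnion]; exact ⟨r, hr, hxr⟩
    · refine Submodule.mem_sup_right (Submodule.subset_span ?_)
      simp only [Set.mem_iUnion]; exact ⟨r, hr, hxr⟩
  intro x hx
  obtain ⟨y, hy, z, hz, rfl⟩ := Submodule.mem_sup.mp (hsub hx)
  have e : star (y + z) * (y + z)
      = star y * y + (star y * z + (star z * y + star z * z)) := by
    rw [star_add]; noncomm_ring
  rw [e, map_add, map_add, map_add]
  rw [hAN z hz (star y) (hMA (hMstar y hy)),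
      hNA (star z) (hNstar z hz) y (hMA hy),
      hNA (star z) (hNstar z hz) z (hNAle hz)]
  simpa using hpos y hy
end

section
/- Let (G,P) be a quasi-lattice ordered group and let S ⊆ P∖{e} be a generating set of P (every element of P∖{e} is a finite product of elements of S) with the property that for every p ∈ P and s ∈ S, either p ∨ s = p, or p ∨ s = ps, or p and s have no common upper bound. Then every Ω ∈ B_P can be written as a finite disjoint union of sets, each of which is either of the form pP for some p ∈ P, or of the form p·⋂_{s∈J}(P ∖ sP) for some p ∈ P and some finite nonempty subset J ⊆ S. -/
/-- The order on `G` induced by the submonoid `P`: `g ≤ h` iff `g⁻¹ * h ∈ P`. -/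
def QLe {G : Type*} [Group G] (P : Submonoid G) (g h : G) : Prop := g⁻¹ * h ∈ P

/-- `u` is the least upper bound of `g` and `h` with respect to `QLe P`. -/
def QLub {G : Type*} [Group G] (P : Submonoid G) (g h u : G) : Prop :=
  QLe P g u ∧ QLe P h u ∧ ∀ v, QLe P g v → QLe P h v → QLe P u v

/-- `(G, P)` is a quasi-lattice ordered group. -/
structure QuasiLatticeOrdered {G : Type*} [Group G] (P : Submonoid G) : Prop where
  gen : Subgroup.closure (P : Set G) = ⊤
  cap : ∀ g ∈ P, g⁻¹ ∈ P → g = 1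
  lub : ∀ g h : G, (∃ u, QLe P g u ∧ QLe P h u) → ∃ u, QLub P g h u

/-- Membership in the algebra `B_P` of subsets of `P` generated by the sets
`pP = {x | p⁻¹ x ∈ P}`, `p ∈ P`: the smallest collection of subsets containing the sets
`pP` and closed under complements in `P`, finite unions and finite intersections. -/
inductive MemBP {G : Type*} [Group G] (P : Submonoid G) : Set G → Prop
  | basic (p : G) (hp : p ∈ P) : MemBP P {x | QLe P p x}
  | compl (Ω : Set G) : MemBP P Ω → MemBP P ((P : Set G) \ Ω)
  | union (Ω₁ Ω₂ : Set G) : MemBP P Ω₁ → MemBP P Ω₂ → MemBP P (Ω₁ ∪ Ω₂)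
  | inter (Ω₁ Ω₂ : Set G) : MemBP P Ω₁ → MemBP P Ω₂ → MemBP P (Ω₁ ∩ Ω₂)

/-- For a finite set `J ⊆ P \ {e}`, `Ω_J = ⋂_{q ∈ J} (P \ qP)`
(with the convention `Ω_∅ = P`). -/
def OmegaJ {G : Type*} [Group G] (P : Submonoid G) (J : Finset G) : Set G :=
  (P : Set G) ∩ ⋂ q ∈ J, {x | QLe P q x}ᶜ

namespace S14

variable {G : Type*} [Group G] {P : Submonoid G} {S : Set G}

def Cone (P : Submonoid G) (p : G) : Set G := {x | QLe P p x}

lemma mem_cone {p x : G} : x ∈ Cone P p ↔ p⁻¹ * x ∈ P := Iff.rfl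

lemma qle_refl (g : G) : QLe P g g := by simpa [QLe] using P.one_mem

lemma qle_trans {a b c : G} (h1 : QLe P a b) (h2 : QLe P b c) : QLe P a c := by
  have h := P.mul_mem h1 h2
  have e : (a⁻¹ * b) * (b⁻¹ * c) = a⁻¹ * c := by group
  rwa [e] at h

lemma mem_of_qle {a b : G} (ha : a ∈ P) (h : QLe P a b) : b ∈ P := by
  have h' := P.mul_mem ha h
  have e : a * (a⁻¹ * b) = b := by group
  rwa [e] at h'

lemma cone_one : Cone P 1 = (P : Set G) := by ext x; simp [Cone, QLe]

lemma cone_subset {p : G} (hp : p ∈ P) : Cone P p ⊆ (P : Set G) :=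
  fun _ hx => mem_of_qle hp hx

lemma mem_lmul {p x : G} {A : Set G} : x ∈ (p * ·) '' A ↔ p⁻¹ * x ∈ A := by
  constructor
  · rintro ⟨a, ha, rfl⟩; simpa using ha
  · intro h; exact ⟨p⁻¹ * x, h, by group⟩

lemma qle_cancel {s q x : G} : QLe P (s * q) x ↔ QLe P q (s⁻¹ * x) := by
  unfold QLe
  rw [show (s * q)⁻¹ * x = q⁻¹ * (s⁻¹ * x) from by group]

lemma qle_mul_self {s b : G} (hb : b ∈ P) : QLe P s (s * b) := by
  unfold QLe; simpa

lemma mem_omegaJ {J : Finset G} {x : G} :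
    x ∈ OmegaJ P J ↔ x ∈ P ∧ ∀ q ∈ J, ¬ QLe P q x := by
  simp [OmegaJ]

lemma omegaJ_subset {J : Finset G} : OmegaJ P J ⊆ (P : Set G) :=
  fun _ hx => (mem_omegaJ.1 hx).1

lemma omegaJ_empty : OmegaJ P (∅ : Finset G) = (P : Set G) := by
  ext x; simp [mem_omegaJ]

def Nice (P : Submonoid G) (S : Set G) (T : Set G) : Prop :=
  ∃ p ∈ P, ∃ J : Finset G, ↑J ⊆ S ∧ T = (p * ·) '' OmegaJ P J

def IsD (P : Submonoid G) (S : Set G) (Ω : Set G) : Prop :=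
  ∃ (n : ℕ) (T : Fin n → Set G), (∀ i, Nice P S (T i)) ∧
    (∀ i j, i ≠ j → Disjoint (T i) (T j)) ∧ Ω = ⋃ i, T i

lemma nice_cone {p : G} (hp : p ∈ P) : Nice P S (Cone P p) := by
  refine ⟨p, hp, ∅, by simp, ?_⟩
  rw [omegaJ_empty]; ext x; simp [mem_lmul, Cone, QLe]

lemma nice_omegaJ {J : Finset G} (hJ : ↑J ⊆ S) : Nice P S (OmegaJ P J) := by
  refine ⟨1, P.one_mem, J, hJ, ?_⟩
  ext x; simp [mem_lmul]

lemma mem_lmul_omegaJ {p x : G} {F : Finset G} :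
    x ∈ (p * ·) '' OmegaJ P F ↔ QLe P p x ∧ ∀ s ∈ F, ¬ QLe P (p * s) x := by
  rw [mem_lmul, mem_omegaJ]
  exact ⟨fun ⟨h1, h2⟩ => ⟨h1, fun s hs h => h2 s hs (qle_cancel.1 h)⟩,
    fun ⟨h1, h2⟩ => ⟨h1, fun s hs h => h2 s hs (qle_cancel.2 h)⟩⟩

lemma nice_subset_cone {p : G} {J : Finset G} : (p * ·) '' OmegaJ P J ⊆ Cone P p :=
  fun _ hx => (mem_lmul_omegaJ.1 hx).1


lemma isD_empty : IsD P S (∅ : Set G) :=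
  ⟨0, fun i => i.elim0, fun i => i.elim0, fun i => i.elim0, by simp⟩

lemma isD_nice {T : Set G} (h : Nice P S T) : IsD P S T :=
  ⟨1, fun _ => T, fun _ => h, fun i j hij => absurd (Subsingleton.elim i j) hij,
    (Set.iUnion_const T).symm⟩

lemma isD_iUnion {ι : Type} [Fintype ι] {A : ι → Set G}
    (h : ∀ i, IsD P S (A i)) (hd : ∀ i j, i ≠ j → Disjoint (A i) (A j)) :
    IsD P S (⋃ i, A i) := by
  choose n T hT hTd hTu using h
  let σ := (i : ι) × Fin (n i)
  let e : Fin (Fintype.card σ) ≃ σ := (Fintype.equivFin σ).symm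
  refine ⟨Fintype.card σ, fun k => T (e k).1 (e k).2, fun k => hT _ _, ?_, ?_⟩
  · intro k l hkl
    have hekl : e k ≠ e l := fun h' => hkl (e.injective h')
    rcases hk : e k with ⟨i, a⟩
    rcases hl : e l with ⟨j, b⟩
    show Disjoint (T (e k).1 (e k).2) (T (e l).1 (e l).2)
    rw [hk, hl] at hekl ⊢
    by_cases hij : i = j
    · subst hij
      have hab : a ≠ b := fun hab => hekl (by rw [hab])
      exact hTd i a b hab
    · refine Disjoint.mono ?_ ?_ (hd _ _ hij)
      · rw [hTu i]; exact Set.subset_iUnion _ _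
      · rw [hTu j]; exact Set.subset_iUnion _ _
  · ext x
    simp only [Set.mem_iUnion]
    constructor
    · rintro ⟨i, hx⟩
      rw [hTu i] at hx
      rcases Set.mem_iUnion.1 hx with ⟨a, ha⟩
      refine ⟨e.symm ⟨i, a⟩, ?_⟩
      have he : e (e.symm ⟨i, a⟩) = ⟨i, a⟩ := e.apply_symm_apply _
      rw [he]
      exact ha
    · rintro ⟨k, hk⟩
      exact ⟨(e k).1, by rw [hTu]; exact Set.mem_iUnion.2 ⟨(e k).2, hk⟩⟩

lemma isD_union2 {A B : Set G} (hA : IsD P S A) (hB : IsD P S B) (hd : Disjoint A B) :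
    IsD P S (A ∪ B) := by
  rw [Set.union_eq_iUnion]
  refine isD_iUnion ?_ ?_
  · intro b; cases b
    · simpa using hB
    · simpa using hA
  · intro i j hij
    cases i <;> cases j
    · exact absurd rfl hij
    · simpa using hd.symm
    · simpa using hd
    · exact absurd rfl hij

lemma isD_lmul {p : G} (hp : p ∈ P) {Ω : Set G} (h : IsD P S Ω) :
    IsD P S ((p * ·) '' Ω) := by
  obtain ⟨n, T, hT, hd, rfl⟩ := h
  refine ⟨n, fun i => (p * ·) '' T i, ?_, ?_, ?_⟩
  · intro i
    obtain ⟨q, hq, J, hJ, hTq⟩ := hT i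
    refine ⟨p * q, P.mul_mem hp hq, J, hJ, ?_⟩
    show (p * ·) '' T i = _
    rw [hTq, ← Set.image_comp]
    have hfe : ((p * ·) ∘ (q * ·)) = ((p * q) * ·) := by
      funext x; show p * (q * x) = (p * q) * x; group
    rw [hfe]
  · intro i j hij
    exact (Set.disjoint_image_iff (mul_right_injective p)).2 (hd i j hij)
  · rw [Set.image_iUnion]


lemma master (hQL : QuasiLatticeOrdered P) (hS : S ⊆ (P : Set G) \ {1})
    (hgen : Submonoid.closure S = P)
    (hprop : ∀ p ∈ P, ∀ s ∈ S, (∃ u, QLe P p u ∧ QLe P s u) →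
      QLub P p s p ∨ QLub P p s (p * s)) :
    ∀ a ∈ Submonoid.closure S, ∀ F : Finset G, ↑F ⊆ S →
      IsD P S (OmegaJ P F \ Cone P a) := by
  intro a ha
  induction ha using Submonoid.closure_induction_left with
  | one =>
    intro F _
    have h0 : OmegaJ P F \ Cone P 1 = ∅ := by
      rw [cone_one]
      exact Set.diff_eq_empty.2 omegaJ_subset
    rw [h0]
    exact isD_empty
  | mul_left s hs b hb ih =>
    intro F hF
    classical
    have hsP : s ∈ P := (hS hs).1
    have hbP : b ∈ P := by rw [← hgen]; exact hb
    by_cases hcase : ∃ q ∈ F, QLub P s q s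
    · obtain ⟨q, hqF, hq⟩ := hcase
      have key : OmegaJ P F \ Cone P (s * b) = OmegaJ P (insert s F) := by
        ext x
        rw [Set.mem_diff, mem_omegaJ, mem_omegaJ]
        constructor
        · rintro ⟨⟨hxP, hFx⟩, _⟩
          refine ⟨hxP, fun r hr => ?_⟩
          rcases Finset.mem_insert.1 hr with rfl | hrF
          · exact fun hsx => hFx q hqF (qle_trans hq.2.1 hsx)
          · exact hFx r hrF
        · rintro ⟨hxP, hIx⟩
          refine ⟨⟨hxP, fun r hr => hIx r (Finset.mem_insert_of_mem hr)⟩, ?_⟩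
          intro hsbx
          exact hIx s (Finset.mem_insert_self s F)
            (qle_trans (qle_mul_self hbP) hsbx)
      rw [key]
      refine isD_nice (nice_omegaJ ?_)
      rw [Finset.coe_insert]
      exact Set.insert_subset_iff.2 ⟨hs, hF⟩
    · push_neg at hcase
      set F' : Finset G := F.filter (fun q => QLub P s q (s * q)) with hF'def
      have hF'F : F' ⊆ F := Finset.filter_subset _ F
      have hF'S : ↑F' ⊆ S := fun x hx => hF (hF'F hx)
      have key : OmegaJ P F \ Cone P (s * b) =
          OmegaJ P (insert s F) ∪ (s * ·) '' (OmegaJ P F' \ Cone P b) := by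
        ext x
        constructor
        · rintro ⟨hxF, hxsb⟩
          obtain ⟨hxP, hFx⟩ := mem_omegaJ.1 hxF
          by_cases hsx : QLe P s x
          · right
            rw [mem_lmul]
            refine ⟨mem_omegaJ.2 ⟨hsx, ?_⟩, ?_⟩
            · intro r hrF' hry
              obtain ⟨hrF, hlub⟩ := Finset.mem_filter.1 hrF'
              exact hFx r hrF (qle_trans hlub.2.1 (qle_cancel.2 hry))
            · intro hby
              exact hxsb (qle_cancel.2 hby)
          · left
            refine mem_omegaJ.2 ⟨hxP, fun r hr => ?_⟩
            rcases Finset.mem_insert.1 hr with rfl | hrF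
            · exact hsx
            · exact hFx r hrF
        · rintro (hx | hx)
          · obtain ⟨hxP, hIx⟩ := mem_omegaJ.1 hx
            refine ⟨mem_omegaJ.2 ⟨hxP, fun r hr => hIx r (Finset.mem_insert_of_mem hr)⟩, ?_⟩
            intro hsbx
            exact hIx s (Finset.mem_insert_self s F)
              (qle_trans (qle_mul_self hbP) hsbx)
          · rw [mem_lmul] at hx
            obtain ⟨hy, hby⟩ := hx
            obtain ⟨hyP, hF'y⟩ := mem_omegaJ.1 hy
            have hsx : QLe P s x := hyP
            have hxP : x ∈ P := mem_of_qle hsP hsx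
            refine ⟨mem_omegaJ.2 ⟨hxP, ?_⟩, ?_⟩
            · intro r hrF hrx
              have hrS : r ∈ S := hF hrF
              rcases hprop s hsP r hrS ⟨x, hsx, hrx⟩ with h1 | h2
              · exact hcase r hrF h1
              · have hrF' : r ∈ F' := Finset.mem_filter.2 ⟨hrF, h2⟩
                exact hF'y r hrF' (qle_cancel.1 (h2.2.2 x hsx hrx))
            · intro hsbx
              exact hby (qle_cancel.1 hsbx)
      rw [key]
      refine isD_union2 ?_ ?_ ?_
      · refine isD_nice (nice_omegaJ ?_)
        rw [Finset.coe_insert]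
        exact Set.insert_subset_iff.2 ⟨hs, hF⟩
      · exact isD_lmul hsP (ih F' hF'S)
      · rw [Set.disjoint_left]
        rintro x hx hx'
        have h1 : ¬ QLe P s x :=
          (mem_omegaJ.1 hx).2 s (Finset.mem_insert_self s F)
        rw [mem_lmul] at hx'
        exact h1 (omegaJ_subset hx'.1)


variable (hQL : QuasiLatticeOrdered P) (hS : S ⊆ (P : Set G) \ {1})
    (hgen : Submonoid.closure S = P)
    (hprop : ∀ p ∈ P, ∀ s ∈ S, (∃ u, QLe P p u ∧ QLe P s u) →
      QLub P p s p ∨ QLub P p s (p * s))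

include hQL hS hgen hprop

lemma nice_sdiff_cone {T : Set G} (hT : Nice P S T) {c : G} (hc : c ∈ P) :
    IsD P S (T \ Cone P c) := by
  obtain ⟨p, hp, F, hF, rfl⟩ := hT
  by_cases hub : ∃ u, QLe P p u ∧ QLe P c u
  · obtain ⟨u, hu⟩ := hQL.lub p c hub
    have haP : p⁻¹ * u ∈ P := hu.1
    have key : ((p * ·) '' OmegaJ P F) \ Cone P c =
        (p * ·) '' (OmegaJ P F \ Cone P (p⁻¹ * u)) := by
      ext x
      rw [Set.mem_diff, mem_lmul, mem_lmul, Set.mem_diff]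
      constructor
      · rintro ⟨hx, hcx⟩
        refine ⟨hx, fun hax => hcx ?_⟩
        have hux : QLe P u x := by
          rw [mem_cone] at hax
          show u⁻¹ * x ∈ P
          rwa [show (p⁻¹ * u)⁻¹ * (p⁻¹ * x) = u⁻¹ * x from by group] at hax
        exact qle_trans hu.2.1 hux
      · rintro ⟨hx, hax⟩
        refine ⟨hx, fun hcx => hax ?_⟩
        have hpx : QLe P p x := omegaJ_subset hx
        have hux : QLe P u x := hu.2.2 x hpx hcx
        rw [mem_cone, show (p⁻¹ * u)⁻¹ * (p⁻¹ * x) = u⁻¹ * x from by group]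
        exact hux
    rw [key]
    refine isD_lmul hp (master hQL hS hgen hprop (p⁻¹ * u) ?_ F hF)
    rw [hgen]; exact haP
  · have key : ((p * ·) '' OmegaJ P F) \ Cone P c = (p * ·) '' OmegaJ P F := by
      ext x
      simp only [Set.mem_diff, and_iff_left_iff_imp]
      intro hx hcx
      exact hub ⟨x, nice_subset_cone hx, hcx⟩
    rw [key]
    exact isD_nice ⟨p, hp, F, hF, rfl⟩

lemma isD_sdiff_cone {Ω : Set G} (h : IsD P S Ω) {c : G} (hc : c ∈ P) :
    IsD P S (Ω \ Cone P c) := by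
  obtain ⟨n, T, hT, hd, rfl⟩ := h
  rw [Set.iUnion_diff]
  exact isD_iUnion (fun i => nice_sdiff_cone hQL hS hgen hprop (hT i) hc)
    (fun i j hij => (hd i j hij).mono Set.diff_subset Set.diff_subset)

lemma isD_sdiff_cones {Ω : Set G} (h : IsD P S Ω) (L : Finset G)
    (hL : ↑L ⊆ (P : Set G)) : IsD P S (Ω \ ⋃ d ∈ L, Cone P d) := by
  classical
  induction L using Finset.induction_on with
  | empty => simpa using h
  | @insert d L hdL ih =>
    rw [Finset.coe_insert, Set.insert_subset_iff] at hL
    have key : Ω \ ⋃ r ∈ insert d L, Cone P r = (Ω \ ⋃ r ∈ L, Cone P r) \ Cone P d := by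
      rw [Finset.set_biUnion_insert, Set.union_comm, ← Set.diff_diff]
    rw [key]
    exact isD_sdiff_cone hQL hS hgen hprop (ih hL.2) hL.1

lemma isD_biUnion_cones (L : Finset G) (hL : ↑L ⊆ (P : Set G)) :
    IsD P S (⋃ d ∈ L, Cone P d) := by
  classical
  induction L using Finset.induction_on with
  | empty => simpa using isD_empty
  | @insert d L hdL ih =>
    rw [Finset.coe_insert, Set.insert_subset_iff] at hL
    rw [Finset.set_biUnion_insert, ← Set.union_diff_self]
    exact isD_union2 (isD_nice (nice_cone hL.1))
      (isD_sdiff_cone hQL hS hgen hprop (ih hL.2) hL.1)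
      Set.disjoint_sdiff_right

lemma nice_inter_nice {T U : Set G} (hT : Nice P S T) (hU : Nice P S U) :
    IsD P S (T ∩ U) := by
  obtain ⟨p, hp, F, hF, rfl⟩ := hT
  obtain ⟨q, hq, K, hK, rfl⟩ := hU
  by_cases hub : ∃ u, QLe P p u ∧ QLe P q u
  · obtain ⟨u, hu⟩ := hQL.lub p q hub
    have huP : u ∈ P := mem_of_qle hp hu.1
    classical
    set L : Finset G := F.image (p * ·) ∪ K.image (q * ·) with hLdef
    have hLP : ↑L ⊆ (P : Set G) := by
      intro d hd
      rcases Finset.mem_union.1 hd with h | h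
      · obtain ⟨s, hsF, rfl⟩ := Finset.mem_image.1 h
        exact P.mul_mem hp ((hS (hF hsF)).1)
      · obtain ⟨t, htK, rfl⟩ := Finset.mem_image.1 h
        exact P.mul_mem hq ((hS (hK htK)).1)
    have key : ((p * ·) '' OmegaJ P F) ∩ ((q * ·) '' OmegaJ P K) =
        Cone P u \ ⋃ d ∈ L, Cone P d := by
      ext x
      rw [Set.mem_inter_iff, mem_lmul_omegaJ, mem_lmul_omegaJ, Set.mem_diff]
      constructor
      · rintro ⟨⟨hpx, hFx⟩, hqx, hKx⟩
        refine ⟨hu.2.2 x hpx hqx, ?_⟩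
        intro hmem
        rcases Set.mem_iUnion₂.1 hmem with ⟨d, hd, hdx⟩
        rcases Finset.mem_union.1 hd with h | h
        · obtain ⟨s, hsF, rfl⟩ := Finset.mem_image.1 h
          exact hFx s hsF hdx
        · obtain ⟨t, htK, rfl⟩ := Finset.mem_image.1 h
          exact hKx t htK hdx
      · rintro ⟨hux, hLx⟩
        have hpx : QLe P p x := qle_trans hu.1 hux
        have hqx : QLe P q x := qle_trans hu.2.1 hux
        refine ⟨⟨hpx, fun s hsF h => hLx ?_⟩, hqx, fun t htK h => hLx ?_⟩
        · exact Set.mem_biUnion (Finset.mem_union_left _ (Finset.mem_image_of_mem _ hsF)) h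
        · exact Set.mem_biUnion (Finset.mem_union_right _ (Finset.mem_image_of_mem _ htK)) h
    rw [key]
    exact isD_sdiff_cones hQL hS hgen hprop (isD_nice (nice_cone huP)) L hLP
  · have key : ((p * ·) '' OmegaJ P F) ∩ ((q * ·) '' OmegaJ P K) = ∅ := by
      ext x
      simp only [Set.mem_inter_iff, Set.mem_empty_iff_false, iff_false, not_and]
      intro h1 h2
      exact hub ⟨x, nice_subset_cone h1, nice_subset_cone h2⟩
    rw [key]
    exact isD_empty

lemma isD_inter {A B : Set G} (hA : IsD P S A) (hB : IsD P S B) :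
    IsD P S (A ∩ B) := by
  obtain ⟨n, T, hT, hdT, rfl⟩ := hA
  obtain ⟨m, U, hU, hdU, rfl⟩ := hB
  have key : (⋃ i, T i) ∩ (⋃ j, U j) = ⋃ k : Fin n × Fin m, (T k.1 ∩ U k.2) := by
    ext x
    simp only [Set.mem_inter_iff, Set.mem_iUnion]
    constructor
    · rintro ⟨⟨i, hi⟩, ⟨j, hj⟩⟩; exact ⟨(i, j), hi, hj⟩
    · rintro ⟨⟨i, j⟩, hi, hj⟩; exact ⟨⟨i, hi⟩, ⟨j, hj⟩⟩
  rw [key]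
  refine isD_iUnion (fun k => nice_inter_nice hQL hS hgen hprop (hT k.1) (hU k.2)) ?_
  rintro ⟨i, j⟩ ⟨k, l⟩ hij
  by_cases h : i = k
  · subst h
    have hjl : j ≠ l := by
      intro h'; exact hij (by rw [h'])
    exact (hdU j l hjl).mono Set.inter_subset_right Set.inter_subset_right
  · exact (hdT i k h).mono Set.inter_subset_left Set.inter_subset_left

lemma compl_nice {T : Set G} (hT : Nice P S T) : IsD P S ((P : Set G) \ T) := by
  obtain ⟨p, hp, F, hF, rfl⟩ := hT
  classical
  set L : Finset G := F.image (p * ·) with hLdef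
  have hLP : ↑L ⊆ (P : Set G) := by
    intro d hd
    obtain ⟨s, hsF, rfl⟩ := Finset.mem_image.1 hd
    exact P.mul_mem hp ((hS (hF hsF)).1)
  have key : (P : Set G) \ ((p * ·) '' OmegaJ P F) =
      ((P : Set G) \ Cone P p) ∪ ⋃ d ∈ L, Cone P d := by
    ext x
    constructor
    · rintro ⟨hxP, hxT⟩
      by_cases hpx : QLe P p x
      · right
        rw [mem_lmul_omegaJ] at hxT
        push_neg at hxT
        obtain ⟨s, hsF, hpsx⟩ := hxT hpx
        exact Set.mem_biUnion (Finset.mem_image_of_mem _ hsF) hpsx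
      · exact Or.inl ⟨hxP, hpx⟩
    · rintro (⟨hxP, hpx⟩ | hx)
      · exact ⟨hxP, fun hxT => hpx (mem_lmul_omegaJ.1 hxT).1⟩
      · rcases Set.mem_iUnion₂.1 hx with ⟨d, hd, hdx⟩
        obtain ⟨s, hsF, rfl⟩ := Finset.mem_image.1 hd
        have hpsP : p * s ∈ P := P.mul_mem hp ((hS (hF hsF)).1)
        refine ⟨mem_of_qle hpsP hdx, fun hxT => ?_⟩
        exact (mem_lmul_omegaJ.1 hxT).2 s hsF hdx
  rw [key]
  refine isD_union2 ?_ ?_ ?_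
  · have h0 : (P : Set G) \ Cone P p = OmegaJ P ∅ \ Cone P p := by rw [omegaJ_empty]
    rw [h0]
    refine master hQL hS hgen hprop p ?_ ∅ (by simp)
    rw [hgen]; exact hp
  · exact isD_biUnion_cones hQL hS hgen hprop L hLP
  · rw [Set.disjoint_left]
    rintro x ⟨hxP, hpx⟩ hx
    rcases Set.mem_iUnion₂.1 hx with ⟨d, hd, hdx⟩
    obtain ⟨s, hsF, rfl⟩ := Finset.mem_image.1 hd
    exact hpx (qle_trans (qle_mul_self ((hS (hF hsF)).1)) hdx)

lemma compl_iUnion_nice :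
    ∀ (n : ℕ) (T : Fin n → Set G), (∀ i, Nice P S (T i)) →
      IsD P S ((P : Set G) \ ⋃ i, T i) := by
  intro n
  induction n with
  | zero =>
    intro T hT
    have h0 : (⋃ i : Fin 0, T i) = ∅ := by simp
    rw [h0, Set.diff_empty, ← cone_one]
    exact isD_nice (nice_cone P.one_mem)
  | succ n ih =>
    intro T hT
    have hsplit : (⋃ i : Fin (n + 1), T i) =
        (⋃ i : Fin n, T i.castSucc) ∪ T (Fin.last n) := by
      ext x
      simp only [Set.mem_iUnion, Set.mem_union]
      constructor
      · rintro ⟨i, hi⟩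
        rcases Fin.eq_castSucc_or_eq_last i with ⟨j, rfl⟩ | rfl
        · exact Or.inl ⟨j, hi⟩
        · exact Or.inr hi
      · rintro (⟨j, hj⟩ | h)
        · exact ⟨j.castSucc, hj⟩
        · exact ⟨Fin.last n, h⟩
    rw [hsplit, Set.diff_inter_diff.symm]
    exact isD_inter hQL hS hgen hprop (ih _ (fun i => hT i.castSucc))
      (compl_nice hQL hS hgen hprop (hT (Fin.last n)))

lemma isD_compl {Ω : Set G} (h : IsD P S Ω) : IsD P S ((P : Set G) \ Ω) := by
  obtain ⟨n, T, hT, -, rfl⟩ := h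
  exact compl_iUnion_nice hQL hS hgen hprop n T hT

omit hQL hS hgen hprop in
lemma memBP_subset {Ω : Set G} (h : MemBP P Ω) : Ω ⊆ (P : Set G) := by
  induction h with
  | basic p hp => exact fun x hx => mem_of_qle hp hx
  | compl Ω h ih => exact Set.diff_subset
  | union Ω₁ Ω₂ h1 h2 ih1 ih2 => exact Set.union_subset ih1 ih2
  | inter Ω₁ Ω₂ h1 h2 ih1 ih2 => exact fun x hx => ih1 hx.1

end S14

/-- Suppose `S ⊆ P \ {e}` generates `P` and for every `p ∈ P` and `s ∈ S`, either
`p ∨ s = p`, or `p ∨ s = ps`, or `p` and `s` have no common upper bound (this holds for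
right-angled Artin monoids with their standard generators).  Then every `Ω ∈ B_P` is a
finite disjoint union of sets of the form `pP` or `p · ⋂_{s ∈ J} (P \ sP)` with `p ∈ P`
and `J ⊆ S` finite nonempty. -/


theorem stmt14 {G : Type*} [Group G] (P : Submonoid G) (hQL : QuasiLatticeOrdered P)
    (S : Set G) (hS : S ⊆ (P : Set G) \ {1})
    (hgen : Submonoid.closure S = P)
    (hprop : ∀ p ∈ P, ∀ s ∈ S, (∃ u, QLe P p u ∧ QLe P s u) →
      QLub P p s p ∨ QLub P p s (p * s)) :
    ∀ Ω : Set G, MemBP P Ω →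
      ∃ (n : ℕ) (T : Fin n → Set G),
        (∀ i, (∃ p ∈ P, T i = {x | QLe P p x}) ∨
          (∃ p ∈ P, ∃ J : Finset G, J.Nonempty ∧ ↑J ⊆ S ∧
            T i = (p * ·) '' OmegaJ P J)) ∧
        (∀ i j, i ≠ j → Disjoint (T i) (T j)) ∧
        Ω = ⋃ i, T i := by
  intro Ω hΩ
  have key : S14.IsD P S Ω := by
    induction hΩ with
    | basic p hp => exact S14.isD_nice (S14.nice_cone hp)
    | compl Ω h ih => exact S14.isD_compl hQL hS hgen hprop ih
    | union Ω₁ Ω₂ h1 h2 ih1 ih2 =>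
      have hsub := S14.memBP_subset h2
      have key2 : Ω₁ ∪ Ω₂ = Ω₁ ∪ (Ω₂ ∩ ((P : Set G) \ Ω₁)) := by
        ext x
        constructor
        · rintro (h | h)
          · exact Or.inl h
          · by_cases hx1 : x ∈ Ω₁
            · exact Or.inl hx1
            · exact Or.inr ⟨h, hsub h, hx1⟩
        · rintro (h | ⟨h, -⟩)
          · exact Or.inl h
          · exact Or.inr h
      rw [key2]
      refine S14.isD_union2 ih1
        (S14.isD_inter hQL hS hgen hprop ih2 (S14.isD_compl hQL hS hgen hprop ih1)) ?_
      rw [Set.disjoint_left]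
      intro x hx hx'
      exact hx'.2.2 hx
    | inter Ω₁ Ω₂ h1 h2 ih1 ih2 => exact S14.isD_inter hQL hS hgen hprop ih1 ih2
  obtain ⟨n, T, hT, hd, hu⟩ := key
  refine ⟨n, T, fun i => ?_, hd, hu⟩
  obtain ⟨p, hp, J, hJS, hTi⟩ := hT i
  rcases J.eq_empty_or_nonempty with rfl | hJ
  · left
    refine ⟨p, hp, ?_⟩
    rw [hTi, S14.omegaJ_empty]
    ext x
    simp only [S14.mem_lmul, Set.mem_setOf_eq]
    exact Iff.rfl
  · exact Or.inr ⟨p, hp, J, hJ, hJS, hTi⟩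
end

section
/- Let α be a real number with α > 2, let m ≥ 1 be an integer, let λ ∈ [0,1], and let A be the 2×2 real matrix with rows (1, −2/α) and (−2/α, 1). Then both entries of the vector A^m·(λ, 1−λ)ᵀ are nonnegative if and only if |λ − 1/2| ≤ (1/2)·((α−2)/(α+2))^m. -/
lemma stmt15_pow (α : ℝ) (hα0 : α ≠ 0) (m : ℕ) :
    !![1, -2/α; -2/α, 1] ^ m =
      !![(((α-2)/α)^m + ((α+2)/α)^m)/2, (((α-2)/α)^m - ((α+2)/α)^m)/2;
         (((α-2)/α)^m - ((α+2)/α)^m)/2, (((α-2)/α)^m + ((α+2)/α)^m)/2] := by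
  have hpow : ∀ n : ℕ, (α:ℝ)^n ≠ 0 := fun n => pow_ne_zero n hα0
  induction m with
  | zero => simp [Matrix.one_fin_two]
  | succ n ih =>
      rw [pow_succ, ih, Matrix.mul_fin_two]
      ext i j
      fin_cases i <;> fin_cases j <;>
        · simp only [Matrix.cons_val', Matrix.cons_val_zero, Matrix.cons_val_one,
            Matrix.head_cons, Matrix.empty_val', Matrix.cons_val_fin_one,
            Matrix.head_fin_const, Matrix.of_apply, div_pow, pow_succ]
          field_simp
          ring

/-- For `α > 2`, `m ≥ 1` and `λ ∈ [0,1]`, both entries of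
`[[1, −2/α], [−2/α, 1]]^m · (λ, 1−λ)ᵀ` are nonnegative if and only if
`|λ − 1/2| ≤ (1/2) ((α−2)/(α+2))^m`. -/
theorem stmt15 (α : ℝ) (hα : 2 < α) (m : ℕ) (hm : 1 ≤ m) (lam : ℝ)
    (hlam : lam ∈ Set.Icc (0 : ℝ) 1) :
    (0 ≤ ((!![1, -2/α; -2/α, 1] ^ m).mulVec ![lam, 1 - lam]) 0 ∧
      0 ≤ ((!![1, -2/α; -2/α, 1] ^ m).mulVec ![lam, 1 - lam]) 1) ↔
    |lam - 1/2| ≤ (1/2) * ((α - 2)/(α + 2)) ^ m := by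
  have hα0 : α ≠ 0 := by linarith
  have hαp : (0:ℝ) < α := by linarith
  have hrpos : (0:ℝ) < ((α+2)/α)^m := pow_pos (div_pos (by linarith) hαp) m
  have hqpos : (0:ℝ) < ((α-2)/α)^m := pow_pos (div_pos (by linarith) hαp) m
  have hratio : (1:ℝ)/2 * ((α - 2)/(α + 2)) ^ m =
      ((α-2)/α)^m / 2 / ((α+2)/α)^m := by
    have h1 : (α+2) ≠ 0 := by linarith
    rw [div_pow, div_pow, div_pow]
    field_simp
  rw [stmt15_pow α hα0 m, hratio, le_div_iff₀ hrpos]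
  rw [show |lam - 1/2| * ((α+2)/α)^m = |(lam - 1/2) * ((α+2)/α)^m| by
    rw [abs_mul, abs_of_pos hrpos], abs_le]
  simp [Matrix.mulVec, dotProduct, Fin.sum_univ_two]
  constructor
  · rintro ⟨h1, h2⟩
    constructor <;> nlinarith
  · rintro ⟨h1, h2⟩
    constructor <;> nlinarith
end
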